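/- Define h : ℝ² → ℝ² by h(x, y) = ( x²·((1/2)ln(x²) − y), x²·((1/2)ln(x²) + x) ) for x ≠ 0 and h(0, y) = (0, 0). Then h is continuously differentiable (of class C¹) on all of ℝ². (This is the vector field obtained by multiplying the right-hand side of Sprott's logarithmic system by x²; it is defined everywhere in the plane, is C¹, and has the same orbits as the logarithmic system away from the y-axis, so the Poincaré–Bendixson theorem applies to it.) -/

import Mathlib

open Real Filter Topology

/-- Sprott's logarithmic vector field multiplied by `x²`, extended by `(0,0)`
to the `y`-axis. -/
noncomputable def sprottPoly : ℝ × ℝ → ℝ × ℝ := fun p =>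
  if p.1 = 0 then (0, 0)
  else (p.1 ^ 2 * ((1 / 2) * Real.log (p.1 ^ 2) - p.2),
        p.1 ^ 2 * ((1 / 2) * Real.log (p.1 ^ 2) + p.1))

lemma contAux : Continuous (fun x : ℝ => x * Real.log (x ^ 2)) := by
  have h : (fun x : ℝ => x * Real.log (x ^ 2)) = fun x => 2 * (x * Real.log x) := by
    funext x; rw [Real.log_pow]; push_cast; ring
  rw [h]
  exact continuous_const.mul Real.continuous_mul_log

lemma tendstoAux : Tendsto (fun x : ℝ => x * Real.log (x ^ 2)) (𝓝 0) (𝓝 0) := by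
  have := contAux.tendsto 0
  simpa using this

lemma hasDerivAtAux (x : ℝ) :
    HasDerivAt (fun x : ℝ => x ^ 2 * Real.log (x ^ 2))
      (2 * x * Real.log (x ^ 2) + 2 * x) x := by
  rcases eq_or_ne x 0 with rfl | hx
  · rw [hasDerivAt_iff_tendsto_slope]
    have h : Tendsto (fun x : ℝ => x * Real.log (x ^ 2)) (𝓝[≠] (0:ℝ)) (𝓝 0) :=
      tendstoAux.mono_left nhdsWithin_le_nhds
    simp only [Real.log_zero, mul_zero, zero_mul, add_zero]
    refine h.congr' ?_
    filter_upwards [self_mem_nhdsWithin] with y hy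
    simp only [Set.mem_compl_iff, Set.mem_singleton_iff] at hy
    rw [slope_def_field]
    field_simp
    ring
  · have h1 : HasDerivAt (fun x : ℝ => x ^ 2) (2 * x) x := by
      simpa using hasDerivAt_pow 2 x
    have h2 : HasDerivAt (fun x : ℝ => Real.log (x ^ 2)) (2 * x / x ^ 2) x :=
      h1.log (pow_ne_zero 2 hx)
    have h3 : HasDerivAt (fun y : ℝ => y ^ 2 * Real.log (y ^ 2))
        (2 * x * Real.log (x ^ 2) + x ^ 2 * (2 * x / x ^ 2)) x := h1.mul h2
    convert h3 using 1
    field_simp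

lemma contDiffAux : ContDiff ℝ 1 (fun x : ℝ => x ^ 2 * Real.log (x ^ 2)) := by
  rw [contDiff_one_iff_deriv]
  refine ⟨fun x => (hasDerivAtAux x).differentiableAt, ?_⟩
  have h : deriv (fun x : ℝ => x ^ 2 * Real.log (x ^ 2))
      = fun x => 2 * (x * Real.log (x ^ 2)) + 2 * x := by
    funext x
    rw [(hasDerivAtAux x).deriv]
    ring
  rw [h]
  exact (continuous_const.mul contAux).add (continuous_const.mul continuous_id)

/-- the vector field obtained by multiplying the right-hand side
of Sprott's logarithmic system by `x²` is continuously differentiable on all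
of `ℝ²`, so the Poincaré–Bendixson theorem applies to it. -/
theorem sprottPoly_contDiff : ContDiff ℝ 1 sprottPoly := by
  have heq : sprottPoly = fun p : ℝ × ℝ =>
      ((1/2) * (p.1 ^ 2 * Real.log (p.1 ^ 2)) - p.1 ^ 2 * p.2,
       (1/2) * (p.1 ^ 2 * Real.log (p.1 ^ 2)) + p.1 ^ 2 * p.1) := by
    funext p
    unfold sprottPoly
    rcases eq_or_ne p.1 0 with h | h
    · simp [h]
    · simp only [if_neg h, Prod.mk.injEq]
      constructor <;> ring
  rw [heq]
  have hq : ContDiff ℝ 1 (fun p : ℝ × ℝ => p.1 ^ 2 * Real.log (p.1 ^ 2)) :=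
    contDiffAux.comp contDiff_fst
  apply ContDiff.prodMk
  · exact (contDiff_const.mul hq).sub ((contDiff_fst.pow 2).mul contDiff_snd)
  · exact (contDiff_const.mul hq).add ((contDiff_fst.pow 2).mul contDiff_fst)
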